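/- Let ν be a probability measure on the circle 𝕋 admitting a continuous density with respect to λ. Then U₁ is differentiable on 𝕋 and for every x ∈ 𝕋, U₁'(x) = ν({y ∈ 𝕋 : ⟨y−x⟩ ∈ (−π,0)}) − ν({y ∈ 𝕋 : ⟨y−x⟩ ∈ (0,π)}), i.e. U₁'(x) equals the ν-measure of the open half-circle (x−π, x) minus the ν-measure of the open half-circle (x, x+π). -/

import Mathlib

open MeasureTheory Real Set Filter

noncomputable section

instance : Fact (0 < 2 * π) := ⟨Real.two_pi_pos⟩

/-- The circle `𝕋 = ℝ/(2πℤ)`. -/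
abbrev 𝕋 : Type := AddCircle (2 * π)

/-- The normalized Haar probability measure `λ` on the circle. -/
def lam : Measure 𝕋 := (ENNReal.ofReal (2 * π))⁻¹ • volume

/-- The representative of a point of the circle in `(-π, π]`. -/
def rep (z : 𝕋) : ℝ := ((AddCircle.equivIoc (2 * π) (-π) z : Set.Ioc (-π) (-π + 2 * π)) : ℝ)

lemma rep_coe (z : 𝕋) : ((rep z : ℝ) : 𝕋) = z := (AddCircle.equivIoc (2 * π) (-π)).symm_apply_apply z

lemma rep_mem (z : 𝕋) : rep z ∈ Set.Ioc (-π) π := by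
  have h := (AddCircle.equivIoc (2 * π) (-π) z).2
  exact ⟨h.1, le_of_le_of_eq h.2 (by ring)⟩

lemma rep_coe_eq {r : ℝ} (hr : r ∈ Set.Ioc (-π) π) : rep ((r : ℝ) : 𝕋) = r := by
  have h : rep ((r : ℝ) : 𝕋) = toIocMod Real.two_pi_pos (-π) r := rfl
  rw [h, toIocMod_eq_self]
  exact ⟨hr.1, by have := hr.2; linarith⟩

lemma norm_eq_abs_rep (z : 𝕋) : ‖z‖ = |rep z| := by
  conv_lhs => rw [← rep_coe z]
  rw [AddCircle.norm_coe_eq_abs_iff (2 * π) (by positivity)]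
  have h := rep_mem z
  rw [abs_of_pos Real.two_pi_pos]
  rw [abs_le]
  exact ⟨by linarith [h.1], by linarith [h.2]⟩

lemma rep_eq_zero_iff (z : 𝕋) : rep z = 0 ↔ z = 0 := by
  constructor
  · intro h
    rw [← rep_coe z, h]; norm_cast
  · rintro rfl
    have : ((0:ℝ) : 𝕋) = (0 : 𝕋) := by norm_cast
    rw [← this, rep_coe_eq ⟨by linarith [Real.pi_pos], Real.pi_pos.le⟩]

lemma rep_eq_pi_iff (z : 𝕋) : rep z = π ↔ z = ((π:ℝ) : 𝕋) := by
  constructor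
  · intro h; rw [← rep_coe z, h]
  · rintro rfl; exact rep_coe_eq ⟨by linarith [Real.pi_pos], le_refl _⟩

lemma lipschitz_coe : LipschitzWith 1 ((↑) : ℝ → 𝕋) := by
  apply LipschitzWith.of_dist_le_mul
  intro a b
  rw [NNReal.coe_one, one_mul, dist_eq_norm, dist_eq_norm]
  rw [← AddCircle.coe_sub]
  exact QuotientAddGroup.norm_mk_le_norm

lemma lipschitz_dist (y : 𝕋) : LipschitzWith 1 (fun h : ℝ => dist ((h:𝕋)) y) := by
  have := (LipschitzWith.dist_right y).comp lipschitz_coe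
  simpa [Function.comp_def, dist_comm] using this

lemma dist_circle_eq (h : ℝ) (y : 𝕋) : dist ((h:𝕋)) y = |rep (y - (h:𝕋))| := by
  rw [dist_comm, dist_eq_norm, norm_eq_abs_rep]

lemma hasDerivAt_dist_circle (x : ℝ) (y : 𝕋) (hy0 : y - (x:𝕋) ≠ 0)
    (hyπ : y - (x:𝕋) ≠ ((π:ℝ) : 𝕋)) :
    HasDerivAt (fun h : ℝ => dist ((h:𝕋)) y)
      (({y : 𝕋 | rep (y - (x:𝕋)) ∈ Set.Ioo (-π) 0}).indicator (fun _ => (1:ℝ)) y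
        - ({y : 𝕋 | rep (y - (x:𝕋)) ∈ Set.Ioo 0 π}).indicator (fun _ => (1:ℝ)) y) x := by
  set r := rep (y - (x:𝕋)) with hrdef
  have hmem := rep_mem (y - (x:𝕋))
  have hr0 : r ≠ 0 := fun h => hy0 ((rep_eq_zero_iff _).mp h)
  have hrπ : r ≠ π := fun h => hyπ ((rep_eq_pi_iff _).mp h)
  have hrlt : r < π := lt_of_le_of_ne hmem.2 hrπ
  have habs : |r| < π := abs_lt.2 ⟨hmem.1, hrlt⟩
  have habs0 : 0 < |r| := abs_pos.2 hr0
  set ε := min (π - |r|) |r| with hεdef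
  have hεpos : 0 < ε := lt_min (by linarith) habs0
  have heq : ∀ h ∈ Metric.ball x ε, dist ((h:𝕋)) y = |r + x - h| := by
    intro h hh
    rw [Metric.mem_ball, Real.dist_eq] at hh
    have hxh : |x - h| < ε := by rw [abs_sub_comm]; exact hh
    have hb : |r + x - h| ≤ |2 * π| / 2 := by
      rw [abs_of_pos Real.two_pi_pos]
      have : |r + x - h| ≤ |r| + |x - h| := by
        have := abs_add_le r (x - h); rwa [show r + (x - h) = r + x - h by ring] at this
      have hεle : ε ≤ π - |r| := min_le_left _ _
      linarith
    have hcoe : y - ((h:ℝ) : 𝕋) = ((r + x - h : ℝ) : 𝕋) := by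
      have hrc : ((r : ℝ) : 𝕋) = y - (x:𝕋) := rep_coe _
      have e1 : (r + x - h : ℝ) = r + (x - h) := by ring
      rw [e1, AddCircle.coe_add, hrc, AddCircle.coe_sub]
      abel
    rw [dist_comm, dist_eq_norm, hcoe,
      (AddCircle.norm_coe_eq_abs_iff (2 * π) (by positivity)).mpr hb]
  have hball : Metric.ball x ε ∈ nhds x := Metric.ball_mem_nhds x hεpos
  have hsign : ∀ h ∈ Metric.ball x ε, |x - h| < |r| := by
    intro h hh
    rw [Metric.mem_ball, Real.dist_eq] at hh
    rw [abs_sub_comm]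
    exact lt_of_lt_of_le hh (min_le_right _ _)
  rcases lt_or_gt_of_ne hr0 with hneg | hpos
  · have h₁ : y ∈ {y : 𝕋 | rep (y - (x:𝕋)) ∈ Set.Ioo (-π) 0} := ⟨hmem.1, hneg⟩
    have h₂ : y ∉ {y : 𝕋 | rep (y - (x:𝕋)) ∈ Set.Ioo 0 π} := fun hc => absurd hc.1 (by simp only [not_lt]; exact hneg.le)
    rw [Set.indicator_of_mem h₁, Set.indicator_of_notMem h₂, sub_zero]
    have haff : HasDerivAt (fun h : ℝ => h - x - r) 1 x := ((hasDerivAt_id x).sub_const x).sub_const r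
    refine haff.congr_of_eventuallyEq ?_
    refine Filter.eventuallyEq_of_mem hball fun h hh => ?_
    rw [heq h hh, abs_of_neg ?_]
    · ring
    · have h3 := abs_lt.1 (hsign h hh)
      rw [abs_of_neg hneg] at h3
      linarith [h3.2]
  · have h₁ : y ∉ {y : 𝕋 | rep (y - (x:𝕋)) ∈ Set.Ioo (-π) 0} := fun hc => absurd hc.2 (by simp only [not_lt]; exact hpos.le)
    have h₂ : y ∈ {y : 𝕋 | rep (y - (x:𝕋)) ∈ Set.Ioo 0 π} := ⟨hpos, hrlt⟩
    rw [Set.indicator_of_notMem h₁, Set.indicator_of_mem h₂, zero_sub]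
    have haff : HasDerivAt (fun h : ℝ => r + x - h) (-1) x := by
      simpa using (hasDerivAt_id x).const_sub (r + x)
    refine haff.congr_of_eventuallyEq ?_
    refine Filter.eventuallyEq_of_mem hball fun h hh => ?_
    rw [heq h hh, abs_of_pos ?_]
    have h3 := abs_lt.1 (hsign h hh)
    rw [abs_of_pos hpos] at h3
    linarith [h3.1]

lemma preimage_singleton_count (z : 𝕋) : (((↑) : ℝ → 𝕋) ⁻¹' {z}).Countable := by
  have hsub : (((↑) : ℝ → 𝕋) ⁻¹' {z}) ⊆ Set.range (fun n : ℤ => n • (2 * π) + rep z) := by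
    intro t ht
    simp only [Set.mem_preimage, Set.mem_singleton_iff] at ht
    have h2 : ((t : ℝ) : 𝕋) = ((rep z : ℝ) : 𝕋) := by rw [ht, rep_coe]
    have h3 : t - rep z ∈ AddSubgroup.zmultiples (2 * π) :=
      QuotientAddGroup.eq_iff_sub_mem.mp h2
    obtain ⟨n, hn⟩ := (AddSubgroup.mem_zmultiples_iff).mp h3
    exact ⟨n, by simp only []; linarith [hn]⟩
  exact (Set.countable_range _).mono hsub

lemma volume_singleton (z : 𝕋) : (volume : Measure 𝕋) {z} = 0 := by
  have hmp := AddCircle.measurePreserving_mk (2 * π) (-π)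
  have hms : MeasurableSet ({z} : Set 𝕋) := measurableSet_singleton z
  have h1 : (volume : Measure 𝕋) {z}
      = (volume.restrict (Set.Ioc (-π) (-π + 2 * π))) (((↑) : ℝ → 𝕋) ⁻¹' {z}) :=
    (hmp.measure_preimage hms.nullMeasurableSet).symm
  have h2 : (volume : Measure ℝ) (((↑) : ℝ → 𝕋) ⁻¹' {z}) = 0 :=
    (preimage_singleton_count z).measure_zero _
  rw [h1]
  exact le_antisymm (le_trans (Measure.restrict_apply_le _ _) h2.le) (by positivity)


/-- if `ν` has a continuous density w.r.t. `λ`, then the potential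
`U₁(x) = ∫ d(x,y) ν(dy)` (as a `2π`-periodic function on `ℝ`) is differentiable, with
`U₁'(x) = ν((x-π, x)) - ν((x, x+π))` (measures of the two open half-circles around `x`). -/
theorem U1_first_derivative
    (g : 𝕋 → ℝ) (hg_cont : Continuous g) (hg_nonneg : ∀ x, 0 ≤ g x)
    (ν : Measure 𝕋) [IsProbabilityMeasure ν]
    (hν : ν = lam.withDensity fun y => ENNReal.ofReal (g y))
    (U1 : ℝ → ℝ)
    (hU1 : ∀ x : ℝ, U1 x = ∫ y, dist ((x : 𝕋)) y ∂ν) :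
    ∀ x : ℝ,
      HasDerivAt U1
        ((ν {y : 𝕋 | rep (y - (x : 𝕋)) ∈ Set.Ioo (-π) 0}).toReal
          - (ν {y : 𝕋 | rep (y - (x : 𝕋)) ∈ Set.Ioo 0 π}).toReal) x := by
  intro x
  have hrep_meas : Measurable (rep : 𝕋 → ℝ) :=
    measurable_subtype_coe.comp (AddCircle.measurableEquivIoc (T := 2*π) (-π)).measurable
  have hsubmeas : Measurable (fun y : 𝕋 => rep (y - (x:𝕋))) :=
    hrep_meas.comp (measurable_id.sub measurable_const)
  have hA : MeasurableSet {y : 𝕋 | rep (y - (x : 𝕋)) ∈ Set.Ioo (-π) 0} :=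
    hsubmeas measurableSet_Ioo
  have hB : MeasurableSet {y : 𝕋 | rep (y - (x : 𝕋)) ∈ Set.Ioo 0 π} :=
    hsubmeas measurableSet_Ioo
  have hν_null : ∀ s : Set 𝕋, (volume : Measure 𝕋) s = 0 → ν s = 0 := by
    intro s hs
    have hlam : lam s = 0 := by simp [lam, hs]
    rw [hν]
    exact withDensity_absolutelyContinuous lam _ hlam
  -- the bad set has measure zero
  have hbad : ν {y : 𝕋 | y - (x:𝕋) = 0 ∨ y - (x:𝕋) = ((π:ℝ) : 𝕋)} = 0 := by
    have hsub : {y : 𝕋 | y - (x:𝕋) = 0 ∨ y - (x:𝕋) = ((π:ℝ) : 𝕋)}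
        ⊆ {((x:ℝ) : 𝕋)} ∪ {(((π:ℝ) : 𝕋) + ((x:ℝ) : 𝕋))} := by
      rintro y (hy | hy)
      · left; exact sub_eq_zero.mp hy
      · right; simp only [Set.mem_singleton_iff]; rw [← hy]; abel
    exact measure_mono_null hsub
      (measure_union_null (hν_null _ (volume_singleton _)) (hν_null _ (volume_singleton _)))
  have h_diff : ∀ᵐ y ∂ν, HasDerivAt (fun h : ℝ => dist ((h:𝕋)) y)
      (({y : 𝕋 | rep (y - (x:𝕋)) ∈ Set.Ioo (-π) 0}).indicator (fun _ => (1:ℝ)) y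
        - ({y : 𝕋 | rep (y - (x:𝕋)) ∈ Set.Ioo 0 π}).indicator (fun _ => (1:ℝ)) y) x := by
    have hae : ∀ᵐ y ∂ν, y ∉ {y : 𝕋 | y - (x:𝕋) = 0 ∨ y - (x:𝕋) = ((π:ℝ) : 𝕋)} :=
      measure_eq_zero_iff_ae_notMem.mp hbad
    filter_upwards [hae] with y hy
    push_neg at hy
    exact hasDerivAt_dist_circle x y hy.1 hy.2
  have hF_meas : ∀ᶠ h : ℝ in nhds x, AEStronglyMeasurable (fun y : 𝕋 => dist ((h:𝕋)) y) ν :=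
    Filter.Eventually.of_forall fun h =>
      (Continuous.dist continuous_const continuous_id).aestronglyMeasurable
  have hbound : ∀ y : 𝕋, ‖dist ((x:𝕋)) y‖ ≤ π := by
    intro y
    rw [Real.norm_eq_abs, abs_of_nonneg dist_nonneg, dist_eq_norm]
    have h := AddCircle.norm_le_half_period (p := 2 * π) (x := ((x:ℝ):𝕋) - y)
      (by positivity)
    rw [abs_of_pos Real.two_pi_pos] at h
    linarith
  have hF_int : Integrable (fun y : 𝕋 => dist ((x:𝕋)) y) ν :=
    Integrable.mono' (integrable_const π)
      (Continuous.dist continuous_const continuous_id).aestronglyMeasurable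
      (Filter.Eventually.of_forall hbound)
  have hF'_meas : AEStronglyMeasurable
      (fun y : 𝕋 => ({y : 𝕋 | rep (y - (x:𝕋)) ∈ Set.Ioo (-π) 0}).indicator (fun _ => (1:ℝ)) y
        - ({y : 𝕋 | rep (y - (x:𝕋)) ∈ Set.Ioo 0 π}).indicator (fun _ => (1:ℝ)) y) ν :=
    ((measurable_const.indicator hA).sub (measurable_const.indicator hB)).aestronglyMeasurable
  have h_lip : ∀ᵐ y ∂ν, LipschitzOnWith (Real.nnabs ((fun _ : 𝕋 => (1:ℝ)) y))
      (fun h : ℝ => dist ((h:𝕋)) y) (Metric.ball x 1) := by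
    refine Filter.Eventually.of_forall fun y => ?_
    have := (lipschitz_dist y).lipschitzOnWith (s := Metric.ball x 1)
    simpa using this
  have main := hasDerivAt_integral_of_dominated_loc_of_lip
    (F := fun (h : ℝ) (y : 𝕋) => dist ((h:𝕋)) y)
    (F' := fun y : 𝕋 => ({y : 𝕋 | rep (y - (x:𝕋)) ∈ Set.Ioo (-π) 0}).indicator (fun _ => (1:ℝ)) y
        - ({y : 𝕋 | rep (y - (x:𝕋)) ∈ Set.Ioo 0 π}).indicator (fun _ => (1:ℝ)) y)
    (bound := fun _ : 𝕋 => (1:ℝ)) (Metric.ball_mem_nhds x one_pos) hF_meas hF_int hF'_meas h_lip (integrable_const 1) h_diff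
  have hint : ∫ y, (({y : 𝕋 | rep (y - (x:𝕋)) ∈ Set.Ioo (-π) 0}).indicator (fun _ => (1:ℝ)) y
        - ({y : 𝕋 | rep (y - (x:𝕋)) ∈ Set.Ioo 0 π}).indicator (fun _ => (1:ℝ)) y) ∂ν
      = (ν {y : 𝕋 | rep (y - (x : 𝕋)) ∈ Set.Ioo (-π) 0}).toReal
          - (ν {y : 𝕋 | rep (y - (x : 𝕋)) ∈ Set.Ioo 0 π}).toReal := by
    rw [integral_sub ((integrable_const (1:ℝ)).indicator hA) ((integrable_const (1:ℝ)).indicator hB)]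
    rw [show ({y : 𝕋 | rep (y - (x:𝕋)) ∈ Set.Ioo (-π) 0}).indicator (fun _ => (1:ℝ))
        = ({y : 𝕋 | rep (y - (x:𝕋)) ∈ Set.Ioo (-π) 0}).indicator 1 from rfl,
      show ({y : 𝕋 | rep (y - (x:𝕋)) ∈ Set.Ioo 0 π}).indicator (fun _ => (1:ℝ))
        = ({y : 𝕋 | rep (y - (x:𝕋)) ∈ Set.Ioo 0 π}).indicator 1 from rfl,
      integral_indicator_one hA, integral_indicator_one hB]
    rfl
  have hU : U1 = fun h : ℝ => ∫ y, dist ((h:𝕋)) y ∂ν := funext hU1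
  rw [hU, ← hint]
  exact main.2
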